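/- Let U = T(x_1, x_2, …) be the free unital associative ℤ-algebra on countably many generators. For each (l; k_1,…,k_n)-tree T there exist Hochschild cochains f^T_i ∈ C^{k_i}(U;U), 1 ≤ i ≤ n, and a monomial h^T ∈ U such that for any (l; k_1,…,k_n)-tree S, the coefficient of h^T in O_S(f^T_1,…,f^T_n)(x_1,…,x_l) equals 1 if S = T and 0 otherwise. -/

import Mathlib

/-- A planar rooted tree with legs labeled by natural numbers, `white`
vertices labeled by natural numbers, `black` vertices, and `special`
(arity 0) vertices.  The children lists record the planar structure. -/
inductive RTree : Type
  | leg : ℕ → RTree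
  | special : RTree
  | white : ℕ → List RTree → RTree
  | black : List RTree → RTree

mutual
  /-- Number of occurrences of the white label `i`. -/
  def whiteCount (i : ℕ) : RTree → ℕ
    | .leg _ => 0
    | .special => 0
    | .white j ts => (if j = i then 1 else 0) + whiteCountL i ts
    | .black ts => whiteCountL i ts
  def whiteCountL (i : ℕ) : List RTree → ℕ
    | [] => 0
    | t :: ts => whiteCount i t + whiteCountL i ts
end

mutual
  /-- Number of occurrences of the leg label `j`. -/
  def legCount (j : ℕ) : RTree → ℕ
    | .leg j' => if j' = j then 1 else 0
    | .special => 0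
    | .white _ ts => legCountL j ts
    | .black ts => legCountL j ts
  def legCountL (j : ℕ) : List RTree → ℕ
    | [] => 0
    | t :: ts => legCount j t + legCountL j ts
end

/-- A tree whose root is neither a black vertex nor a special vertex. -/
def RTree.notBlackOrSpecial : RTree → Prop
  | .black _ => False
  | .special => False
  | _ => True

mutual
  /-- Local well-formedness: white vertices have label `< n` and the arity
  prescribed by `k`; black vertices have arity `≥ 2` and no child which is a
  black or a special vertex (no edge connects two black vertices or a black
  vertex with a special vertex). -/
  def IsWF (n : ℕ) (k : ℕ → ℕ) : RTree → Prop
    | .leg _ => True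
    | .special => True
    | .white j ts => j < n ∧ ts.length = k j ∧ IsWFL n k ts
    | .black ts => 2 ≤ ts.length ∧ (∀ t ∈ ts, t.notBlackOrSpecial) ∧ IsWFL n k ts
  def IsWFL (n : ℕ) (k : ℕ → ℕ) : List RTree → Prop
    | [] => True
    | t :: ts => IsWF n k t ∧ IsWFL n k ts
end

/-- An `(l; k 0, …, k (n-1))`-tree: a well-formed planar tree whose white
vertices are labeled bijectively by `{0,…,n-1}` (with arities given by `k`)
and whose legs are labeled bijectively by `{0,…,l-1}`. -/
def IsTree (n l : ℕ) (k : ℕ → ℕ) (T : RTree) : Prop :=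
  IsWF n k T
    ∧ (∀ i : ℕ, whiteCount i T = if i < n then 1 else 0)
    ∧ (∀ j : ℕ, legCount j T = if j < l then 1 else 0)

mutual
  /-- Evaluation of the natural operation `O_T(f_1,…,f_n)(a_0,…,a_{l-1})`
  determined by a tree: the `i`-th white vertex is decorated by the Hochschild
  cochain `f i`, black vertices by the iterated multiplication, special
  vertices by the unit `1`, legs by the inputs `a`, and one composes along the
  tree. -/
  noncomputable def evalT (k : ℕ → ℕ)
      (f : ∀ i : ℕ, MultilinearMap ℤ (fun _ : Fin (k i) => FreeAlgebra ℤ ℕ) (FreeAlgebra ℤ ℕ))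
      (a : ℕ → FreeAlgebra ℤ ℕ) : RTree → FreeAlgebra ℤ ℕ
    | .leg j => a j
    | .special => 1
    | .white i ts => f i (fun s => (evalL k f a ts).getD s.val 1)
    | .black ts => (evalL k f a ts).prod
  noncomputable def evalL (k : ℕ → ℕ)
      (f : ∀ i : ℕ, MultilinearMap ℤ (fun _ : Fin (k i) => FreeAlgebra ℤ ℕ) (FreeAlgebra ℤ ℕ))
      (a : ℕ → FreeAlgebra ℤ ℕ) : List RTree → List (FreeAlgebra ℤ ℕ)
    | [] => []
    | t :: ts => evalT k f a t :: evalL k f a ts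
end


namespace TreeSep

open FreeAlgebra

noncomputable abbrev gen (j : ℕ) : FreeAlgebra ℤ ℕ := FreeAlgebra.ι ℤ j

/-- Separator letters, all `≥ l`. -/
def sep (l i s : ℕ) : ℕ := l + Nat.pair i s

theorem sep_inj {l i s i' s' : ℕ} (h : sep l i s = sep l i' s') : i = i' ∧ s = s' := by
  have := Nat.add_left_cancel h
  exact Nat.pair_eq_pair.mp this

theorem le_sep (l i s : ℕ) : l ≤ sep l i s := Nat.le_add_right _ _

mutual
  /-- The word associated to a tree. -/
  def wordT (l : ℕ) : RTree → List ℕ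
    | .leg j => [j]
    | .special => []
    | .white i ts => sep l i 0 :: wordI l i 1 ts
    | .black ts => wordL l ts
  def wordI (l i : ℕ) : ℕ → List RTree → List ℕ
    | _, [] => []
    | s, t :: ts => wordT l t ++ sep l i s :: wordI l i (s+1) ts
  def wordL (l : ℕ) : List RTree → List ℕ
    | [] => []
    | t :: ts => wordT l t ++ wordL l ts
end

mutual
  /-- A simultaneous induction principle. -/
  theorem recT (motive : RTree → Prop) (motiveL : List RTree → Prop)
      (hleg : ∀ j, motive (.leg j)) (hspec : motive .special)
      (hwhite : ∀ i ts, motiveL ts → motive (.white i ts))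
      (hblack : ∀ ts, motiveL ts → motive (.black ts))
      (hnil : motiveL []) (hcons : ∀ t ts, motive t → motiveL ts → motiveL (t :: ts)) :
      ∀ S, motive S
    | .leg j => hleg j
    | .special => hspec
    | .white i ts => hwhite i ts (recL motive motiveL hleg hspec hwhite hblack hnil hcons ts)
    | .black ts => hblack ts (recL motive motiveL hleg hspec hwhite hblack hnil hcons ts)
  theorem recL (motive : RTree → Prop) (motiveL : List RTree → Prop)
      (hleg : ∀ j, motive (.leg j)) (hspec : motive .special)
      (hwhite : ∀ i ts, motiveL ts → motive (.white i ts))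
      (hblack : ∀ ts, motiveL ts → motive (.black ts))
      (hnil : motiveL []) (hcons : ∀ t ts, motive t → motiveL ts → motiveL (t :: ts)) :
      ∀ L, motiveL L
    | [] => hnil
    | t :: ts => hcons t ts (recT motive motiveL hleg hspec hwhite hblack hnil hcons t)
        (recL motive motiveL hleg hspec hwhite hblack hnil hcons ts)
end

/-- The monomial associated to a word. -/
noncomputable def mono (w : List ℕ) : FreeAlgebra ℤ ℕ :=
  FreeMonoid.lift (FreeAlgebra.ι ℤ) (FreeMonoid.ofList w)

theorem mono_nil : mono [] = 1 := map_one _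

theorem mono_append (a b : List ℕ) : mono (a ++ b) = mono a * mono b := by
  unfold mono
  rw [show FreeMonoid.ofList (a ++ b) = FreeMonoid.ofList a * FreeMonoid.ofList b from rfl,
    map_mul]

theorem mono_single (x : ℕ) : mono [x] = gen x := by
  unfold mono
  rw [show FreeMonoid.ofList [x] = FreeMonoid.of x from rfl, FreeMonoid.lift_eval_of]

theorem mono_cons (x : ℕ) (w : List ℕ) : mono (x :: w) = gen x * mono w := by
  rw [show (x :: w) = [x] ++ w from rfl, mono_append, mono_single]

theorem e_gen (x : ℕ) :
    FreeAlgebra.equivMonoidAlgebraFreeMonoid (gen x)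
      = MonoidAlgebra.of ℤ (FreeMonoid ℕ) (FreeMonoid.of x) := by
  show (FreeAlgebra.lift ℤ fun y => MonoidAlgebra.of ℤ (FreeMonoid ℕ) (FreeMonoid.of y))
      (FreeAlgebra.ι ℤ x) = _
  rw [FreeAlgebra.lift_ι_apply]

theorem e_mono (w : List ℕ) :
    FreeAlgebra.equivMonoidAlgebraFreeMonoid (mono w)
      = MonoidAlgebra.of ℤ (FreeMonoid ℕ) (FreeMonoid.ofList w) := by
  induction w with
  | nil => rw [mono_nil, map_one]; exact (map_one (MonoidAlgebra.of ℤ (FreeMonoid ℕ))).symm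
  | cons x w ih =>
      rw [mono_cons, map_mul, ih, e_gen, ← map_mul]
      rfl

theorem basis_eq_mono (w : List ℕ) :
    (FreeAlgebra.basisFreeMonoid ℤ ℕ) (FreeMonoid.ofList w) = mono w := by
  refine Eq.trans (Module.Basis.map_apply _ _ _) ?_
  have h1 := AlgEquiv.symm_apply_apply
    (FreeAlgebra.equivMonoidAlgebraFreeMonoid (R := ℤ) (X := ℕ)) (mono w)
  rw [e_mono] at h1
  exact h1

theorem repr_mono (w h : List ℕ) :
    (FreeAlgebra.basisFreeMonoid ℤ ℕ).repr (mono w) (FreeMonoid.ofList h)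
      = if w = h then 1 else 0 := by
  classical
  rw [← basis_eq_mono, Module.Basis.repr_self]
  by_cases hwh : w = h
  · subst hwh; simp
  · have hne : FreeMonoid.ofList w ≠ FreeMonoid.ofList h := by
      intro he
      exact hwh (by simpa [FreeMonoid.toList_ofList] using congrArg FreeMonoid.toList he)
    simp [Finsupp.single_apply, hne, hwh]


/-- The cochains. -/
noncomputable def Ff (l : ℕ) (k : ℕ → ℕ) (i : ℕ) :
    MultilinearMap ℤ (fun _ : Fin (k i) => FreeAlgebra ℤ ℕ) (FreeAlgebra ℤ ℕ) :=
  (LinearMap.mulLeft ℤ (gen (sep l i 0))).compMultilinearMap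
    ((MultilinearMap.mkPiAlgebraFin ℤ (k i) (FreeAlgebra ℤ ℕ)).compLinearMap
      (fun s => LinearMap.mulRight ℤ (gen (sep l i (s.val + 1)))))

theorem Ff_apply (l : ℕ) (k : ℕ → ℕ) (i : ℕ) (v : Fin (k i) → FreeAlgebra ℤ ℕ) :
    Ff l k i v = gen (sep l i 0)
      * (List.ofFn fun s : Fin (k i) => v s * gen (sep l i (s.val + 1))).prod := by
  rfl

theorem prod_map_mono (l : ℕ) : ∀ ts : List RTree,
    ((ts.map fun t => mono (wordT l t)).prod) = mono (wordL l ts)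
  | [] => by simp [wordL, mono_nil]
  | t :: ts => by
      rw [List.map_cons, List.prod_cons, prod_map_mono l ts, wordL, mono_append]

theorem ofFn_eval (l i : ℕ) : ∀ (ts : List RTree) (s₀ : ℕ),
    (List.ofFn fun s : Fin ts.length =>
      ((ts.map fun t => mono (wordT l t)).getD s.val 1) * gen (sep l i (s₀ + s.val + 1))).prod
      = mono (wordI l i (s₀ + 1) ts)
  | [], s₀ => by simp [wordI, mono_nil]
  | t :: ts, s₀ => by
      have ih := ofFn_eval l i ts (s₀ + 1)
      simp only [List.length_cons, List.ofFn_succ, List.prod_cons, List.map_cons,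
        List.getD_cons_zero, List.getD_cons_succ, Fin.val_succ, Fin.val_zero]
      rw [show wordI l i (s₀ + 1) (t :: ts)
          = wordT l t ++ sep l i (s₀ + 1) :: wordI l i (s₀ + 2) ts from rfl]
      rw [mono_append, mono_cons]
      rw [show (s₀ + 0 + 1) = s₀ + 1 from by omega]
      simp only [show ∀ m : ℕ, s₀ + (m + 1) + 1 = (s₀ + 1) + m + 1 from fun m => by omega]
      rw [ih]
      rw [show s₀ + 1 + 1 = s₀ + 2 from rfl, mul_assoc]

theorem ofFn_eval' (l i : ℕ) (ts : List RTree) (m : ℕ) (hm : m = ts.length) :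
    (List.ofFn fun s : Fin m =>
      ((ts.map fun t => mono (wordT l t)).getD s.val 1) * gen (sep l i (s.val + 1))).prod
      = mono (wordI l i 1 ts) := by
  subst hm
  have h0 := ofFn_eval l i ts 0
  simpa only [zero_add] using h0

theorem eval_eq (n l : ℕ) (k : ℕ → ℕ) :
    ∀ S, IsWF n k S →
      evalT k (Ff l k) (fun j => FreeAlgebra.ι ℤ j) S = mono (wordT l S) := by
  refine recT
    (motive := fun S => IsWF n k S →
      evalT k (Ff l k) (fun j => FreeAlgebra.ι ℤ j) S = mono (wordT l S))
    (motiveL := fun ts => IsWFL n k ts →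
      evalL k (Ff l k) (fun j => FreeAlgebra.ι ℤ j) ts = ts.map fun t => mono (wordT l t))
    ?_ ?_ ?_ ?_ ?_ ?_
  · intro j _
    rw [evalT, wordT, mono_single]
  · intro _
    rw [evalT, wordT, mono_nil]
  · intro i ts ih hwf
    obtain ⟨hn, hlen, hwfl⟩ := hwf
    rw [evalT, ih hwfl, Ff_apply, wordT, mono_cons]
    congr 1
    exact ofFn_eval' l i ts (k i) hlen.symm
  · intro ts ih hwf
    obtain ⟨_, _, hwfl⟩ := hwf
    rw [evalT, ih hwfl, wordT, prod_map_mono]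
  · intro _
    simp [evalL]
  · intro t ts iht ihts hwf
    obtain ⟨h1, h2⟩ := hwf
    rw [evalL, iht h1, ihts h2, List.map_cons]


/-! ### Counting helpers -/

theorem wc_white (i j : ℕ) (ts : List RTree) :
    whiteCount i (.white j ts) = (if j = i then 1 else 0) + whiteCountL i ts := rfl
theorem wc_black (i : ℕ) (ts : List RTree) :
    whiteCount i (.black ts) = whiteCountL i ts := rfl
theorem wcl_cons (i : ℕ) (t : RTree) (ts : List RTree) :
    whiteCountL i (t :: ts) = whiteCount i t + whiteCountL i ts := rfl
theorem lc_leg (j j' : ℕ) : legCount j (.leg j') = if j' = j then 1 else 0 := rfl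
theorem lc_white (j i : ℕ) (ts : List RTree) :
    legCount j (.white i ts) = legCountL j ts := rfl
theorem lc_black (j : ℕ) (ts : List RTree) :
    legCount j (.black ts) = legCountL j ts := rfl
theorem lcl_cons (j : ℕ) (t : RTree) (ts : List RTree) :
    legCountL j (t :: ts) = legCount j t + legCountL j ts := rfl

/-- `Good l S` : every white label occurs at most once, and all leg labels are `< l`. -/
def Good (l : ℕ) (S : RTree) : Prop :=
  (∀ i, whiteCount i S ≤ 1) ∧ (∀ j, l ≤ j → legCount j S = 0)

def GoodL (l : ℕ) (ts : List RTree) : Prop :=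
  (∀ i, whiteCountL i ts ≤ 1) ∧ (∀ j, l ≤ j → legCountL j ts = 0)

theorem good_white {l i : ℕ} {ts : List RTree} (h : Good l (.white i ts)) : GoodL l ts := by
  constructor
  · intro i'; have := h.1 i'; rw [wc_white] at this; omega
  · intro j hj; have := h.2 j hj; rwa [lc_white] at this

theorem good_black {l : ℕ} {ts : List RTree} (h : Good l (.black ts)) : GoodL l ts := by
  constructor
  · intro i'; have := h.1 i'; rwa [wc_black] at this
  · intro j hj; have := h.2 j hj; rwa [lc_black] at this

theorem goodL_cons {l : ℕ} {t : RTree} {ts : List RTree} (h : GoodL l (t :: ts)) :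
    Good l t ∧ GoodL l ts := by
  refine ⟨⟨fun i => ?_, fun j hj => ?_⟩, ⟨fun i => ?_, fun j hj => ?_⟩⟩
  · have := h.1 i; rw [wcl_cons] at this; omega
  · have := h.2 j hj; rw [lcl_cons] at this; omega
  · have := h.1 i; rw [wcl_cons] at this; omega
  · have := h.2 j hj; rw [lcl_cons] at this; omega

theorem good_of_isTree {n l : ℕ} {k : ℕ → ℕ} {S : RTree} (h : IsTree n l k S) : Good l S := by
  refine ⟨fun i => ?_, fun j hj => ?_⟩
  · rw [h.2.1 i]; split <;> omega
  · rw [h.2.2 j]; split <;> omega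

/-! ### Membership of letters in words -/

def MW (l : ℕ) (S : RTree) : Prop :=
  ∀ x ∈ wordT l S, 1 ≤ legCount x S ∨ ∃ i s, x = sep l i s ∧ 1 ≤ whiteCount i S

def MWL (l : ℕ) (ts : List RTree) : Prop :=
  (∀ x ∈ wordL l ts, 1 ≤ legCountL x ts ∨ ∃ i s, x = sep l i s ∧ 1 ≤ whiteCountL i ts)
    ∧ (∀ i' s' x, x ∈ wordI l i' s' ts →
        1 ≤ legCountL x ts ∨ (∃ i s, x = sep l i s ∧ 1 ≤ whiteCountL i ts)
          ∨ ∃ s'', x = sep l i' s'')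

theorem mem_word_all (l : ℕ) : (∀ S, MW l S) ∧ (∀ ts, MWL l ts) := by
  have hleg : ∀ j, MW l (.leg j) := by
    intro j x hx
    rw [wordT, List.mem_singleton] at hx
    subst hx
    left; rw [lc_leg]; simp
  have hspec : MW l .special := by intro x hx; simp [wordT] at hx
  have hwhite : ∀ i ts, MWL l ts → MW l (.white i ts) := by
    intro i ts ih x hx
    rw [wordT, List.mem_cons] at hx
    rcases hx with rfl | hx
    · right; exact ⟨i, 0, rfl, by rw [wc_white]; simp⟩
    · rcases ih.2 i 1 x hx with h | ⟨i₀, s₀, rfl, hc⟩ | ⟨s'', rfl⟩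
      · left; rwa [lc_white]
      · right; exact ⟨i₀, s₀, rfl, by rw [wc_white]; omega⟩
      · right; exact ⟨i, s'', rfl, by rw [wc_white]; simp⟩
  have hblack : ∀ ts, MWL l ts → MW l (.black ts) := by
    intro ts ih x hx
    rw [wordT] at hx
    rcases ih.1 x hx with h | ⟨i₀, s₀, rfl, hc⟩
    · left; rwa [lc_black]
    · right; exact ⟨i₀, s₀, rfl, by rwa [wc_black]⟩
  have hnil : MWL l [] := by
    constructor
    · intro x hx; simp [wordL] at hx
    · intro i' s' x hx; simp [wordI] at hx
  have hcons : ∀ t ts, MW l t → MWL l ts → MWL l (t :: ts) := by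
    intro t ts iht ihts
    constructor
    · intro x hx
      rw [wordL, List.mem_append] at hx
      rcases hx with hx | hx
      · rcases iht x hx with h | ⟨i₀, s₀, rfl, hc⟩
        · left; rw [lcl_cons]; omega
        · right; exact ⟨i₀, s₀, rfl, by rw [wcl_cons]; omega⟩
      · rcases ihts.1 x hx with h | ⟨i₀, s₀, rfl, hc⟩
        · left; rw [lcl_cons]; omega
        · right; exact ⟨i₀, s₀, rfl, by rw [wcl_cons]; omega⟩
    · intro i' s' x hx
      rw [wordI, List.mem_append, List.mem_cons] at hx
      rcases hx with hx | rfl | hx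
      · rcases iht x hx with h | ⟨i₀, s₀, rfl, hc⟩
        · left; rw [lcl_cons]; omega
        · right; left; exact ⟨i₀, s₀, rfl, by rw [wcl_cons]; omega⟩
      · right; right; exact ⟨s', rfl⟩
      · rcases ihts.2 i' (s' + 1) x hx with h | ⟨i₀, s₀, rfl, hc⟩ | ⟨s'', rfl⟩
        · left; rw [lcl_cons]; omega
        · right; left; exact ⟨i₀, s₀, rfl, by rw [wcl_cons]; omega⟩
        · right; right; exact ⟨s'', rfl⟩
  exact ⟨recT _ (MWL l) hleg hspec hwhite hblack hnil hcons,
    recL (MW l) _ hleg hspec hwhite hblack hnil hcons⟩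

theorem notmem_T {l i : ℕ} (s : ℕ) {t : RTree}
    (hleg : ∀ j, l ≤ j → legCount j t = 0) (hw : whiteCount i t = 0) :
    sep l i s ∉ wordT l t := by
  intro hx
  rcases (mem_word_all l).1 t _ hx with h | ⟨i₀, s₀, hx0, hc⟩
  · rw [hleg _ (le_sep l i s)] at h; omega
  · obtain ⟨rfl, -⟩ := sep_inj hx0
    omega

theorem notmem_L {l i : ℕ} (s : ℕ) {ts : List RTree}
    (hleg : ∀ j, l ≤ j → legCountL j ts = 0) (hw : whiteCountL i ts = 0) :
    sep l i s ∉ wordL l ts := by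
  intro hx
  rcases ((mem_word_all l).2 ts).1 _ hx with h | ⟨i₀, s₀, hx0, hc⟩
  · rw [hleg _ (le_sep l i s)] at h; omega
  · obtain ⟨rfl, -⟩ := sep_inj hx0
    omega

/-! ### Splitting words at a distinguished letter -/

theorem split {x : ℕ} : ∀ (c : List ℕ) {c' b b' : List ℕ},
    x ∉ c → x ∉ c' → c ++ x :: b = c' ++ x :: b' → c = c' ∧ b = b' := by
  intro c
  induction c with
  | nil =>
      intro c' b b' _ h' he
      cases c' with
      | nil => simpa using he
      | cons d c'' =>
          rw [List.nil_append, List.cons_append, List.cons_eq_cons] at he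
          exact absurd (he.1 ▸ List.mem_cons_self (a := d) (l := c'')) h'
  | cons e c1 ih =>
      intro c' b b' h h' he
      cases c' with
      | nil =>
          rw [List.nil_append, List.cons_append, List.cons_eq_cons] at he
          exact absurd (he.1 ▸ List.mem_cons_self (a := e) (l := c1)) h
      | cons e' c1' =>
          rw [List.cons_append, List.cons_append, List.cons_eq_cons] at he
          obtain ⟨rfl, he2⟩ := he
          have h1 : x ∉ c1 := fun hm => h (List.mem_cons_of_mem _ hm)
          have h2 : x ∉ c1' := fun hm => h' (List.mem_cons_of_mem _ hm)
          obtain ⟨rfl, rfl⟩ := ih h1 h2 he2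
          exact ⟨rfl, rfl⟩

/-! ### Last letter of the word of a white vertex -/

theorem wlast_aux (l i : ℕ) : ∀ (ts : List RTree) (t : RTree) (s : ℕ),
    whiteCount i t = 0 → whiteCountL i ts = 0 →
    (∀ j, l ≤ j → legCount j t = 0) → (∀ j, l ≤ j → legCountL j ts = 0) →
    ∃ c, wordI l i s (t :: ts) = c ++ [sep l i (s + ts.length)]
      ∧ sep l i (s + ts.length) ∉ c := by
  intro ts
  induction ts with
  | nil =>
      intro t s hw _ hleg _
      refine ⟨wordT l t, ?_, ?_⟩
      · rw [show wordI l i s [t] = wordT l t ++ [sep l i s] from rfl]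
        simp
      · simpa using notmem_T s hleg hw
  | cons t2 ts' ih =>
      intro t s hw hwl hleg hlegl
      have hwl2 : whiteCount i t2 = 0 ∧ whiteCountL i ts' = 0 := by
        rw [wcl_cons] at hwl; omega
      have hlegl2 : (∀ j, l ≤ j → legCount j t2 = 0) ∧ ∀ j, l ≤ j → legCountL j ts' = 0 := by
        constructor <;> intro j hj <;> have := hlegl j hj <;> rw [lcl_cons] at this <;> omega
      obtain ⟨c, hc, hnc⟩ := ih t2 (s + 1) hwl2.1 hwl2.2 hlegl2.1 hlegl2.2
      refine ⟨wordT l t ++ sep l i s :: c, ?_, ?_⟩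
      · rw [show wordI l i s (t :: t2 :: ts')
            = wordT l t ++ sep l i s :: wordI l i (s+1) (t2 :: ts') from rfl, hc]
        simp only [List.length_cons, List.append_assoc, List.cons_append]
        rw [show s + 1 + ts'.length = s + (ts'.length + 1) from by omega]
      · rw [show s + (t2 :: ts').length = s + 1 + ts'.length from by simp; omega]
        intro hm
        rw [List.mem_append, List.mem_cons] at hm
        rcases hm with hm | hm | hm
        · exact notmem_T _ hleg hw hm
        · obtain ⟨-, h2⟩ := sep_inj hm; omega
        · exact hnc hm

theorem wlast {l i : ℕ} {ts : List RTree}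
    (hw : whiteCountL i ts = 0) (hleg : ∀ j, l ≤ j → legCountL j ts = 0) :
    ∃ c, wordT l (.white i ts) = c ++ [sep l i ts.length] ∧ sep l i ts.length ∉ c := by
  cases ts with
  | nil => exact ⟨[], rfl, by simp⟩
  | cons t ts' =>
      rw [wcl_cons] at hw
      have h1 : (∀ j, l ≤ j → legCount j t = 0) ∧ ∀ j, l ≤ j → legCountL j ts' = 0 := by
        constructor <;> intro j hj <;> have := hleg j hj <;> rw [lcl_cons] at this <;> omega
      obtain ⟨c, hc, hnc⟩ := wlast_aux l i ts' t 1 (by omega) (by omega) h1.1 h1.2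
      refine ⟨sep l i 0 :: c, ?_, ?_⟩
      · rw [show wordT l (.white i (t :: ts')) = sep l i 0 :: wordI l i 1 (t :: ts') from rfl,
          hc]
        simp only [List.length_cons, List.cons_append]
        rw [show 1 + ts'.length = ts'.length + 1 from by omega]
      · intro hm
        rw [List.mem_cons] at hm
        rcases hm with hm | hm
        · obtain ⟨-, h2⟩ := sep_inj hm; simp at h2
        · rw [show (t :: ts').length = 1 + ts'.length from by simp; omega] at hm
          exact hnc hm

/-! ### Nonempty words -/

theorem word_ne_nil {t : RTree} (h : t.notBlackOrSpecial) (l : ℕ) : wordT l t ≠ [] := by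
  cases t with
  | leg j => simp [wordT]
  | special => exact absurd h (by simp [RTree.notBlackOrSpecial])
  | white i ts => simp [wordT]
  | black ts => exact absurd h (by simp [RTree.notBlackOrSpecial])

theorem word_nil {n l : ℕ} {k : ℕ → ℕ} {S : RTree} (hwf : IsWF n k S)
    (h : wordT l S = []) : S = .special := by
  cases S with
  | leg j => simp [wordT] at h
  | special => rfl
  | white i ts => simp [wordT] at h
  | black ts =>
      obtain ⟨hlen, hbs, -⟩ := hwf
      cases ts with
      | nil => simp at hlen
      | cons t ts' =>
          rw [show wordT l (.black (t :: ts')) = wordT l t ++ wordL l ts' from rfl,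
            List.append_eq_nil_iff] at h
          exact absurd h.1 (word_ne_nil (hbs t (List.mem_cons_self (a := t) (l := ts'))) l)


/-! ### Injectivity of the word map -/

theorem good_white_self {l i : ℕ} {ts : List RTree} (h : Good l (.white i ts)) :
    whiteCountL i ts = 0 := by
  have := h.1 i
  rw [wc_white] at this
  simp at this
  omega

theorem white_ne_black {n l : ℕ} {k : ℕ → ℕ} {i : ℕ} {us ts : List RTree}
    (hwfS : IsWF n k (.white i us)) (hwfT : IsWF n k (.black ts))
    (hgS : Good l (.white i us)) (hgT : Good l (.black ts)) :
    wordT l (.white i us) ≠ wordT l (.black ts) := by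
  intro he
  obtain ⟨hiN, hlen, hwflus⟩ := hwfS
  obtain ⟨hlenT, hbs, hwflts⟩ := hwfT
  cases ts with
  | nil => simp at hlenT
  | cons t1 rest =>
    have hrest : rest ≠ [] := by
      intro hr; rw [hr] at hlenT; simp at hlenT
    cases t1 with
    | special => exact absurd (hbs _ List.mem_cons_self) (by simp [RTree.notBlackOrSpecial])
    | black _ => exact absurd (hbs _ List.mem_cons_self) (by simp [RTree.notBlackOrSpecial])
    | leg j =>
        rw [show wordT l (.white i us) = sep l i 0 :: wordI l i 1 us from rfl,
          show wordT l (.black (.leg j :: rest)) = j :: wordL l rest from rfl,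
          List.cons_eq_cons] at he
        have hj : legCount j (RTree.black (.leg j :: rest)) = 0 := by
          apply hgT.2
          rw [← he.1]; exact le_sep l i 0
        rw [lc_black, lcl_cons, lc_leg, if_pos rfl] at hj
        omega
    | white i'' us'' =>
        have hhd : sep l i 0 = sep l i'' 0 := by
          rw [show wordT l (.white i us) = sep l i 0 :: wordI l i 1 us from rfl,
            show wordT l (.black (.white i'' us'' :: rest))
              = sep l i'' 0 :: (wordI l i'' 1 us'' ++ wordL l rest) from rfl,
            List.cons_eq_cons] at he
          exact he.1
        obtain ⟨rfl, -⟩ := sep_inj hhd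
        -- counts on the S side
        have hS0 : whiteCountL i us = 0 := good_white_self hgS
        have hSleg : ∀ j, l ≤ j → legCountL j us = 0 := by
          intro j hj; have := hgS.2 j hj; rwa [lc_white] at this
        -- counts on the T side
        have hT1 := hgT.1 i
        rw [wc_black, wcl_cons, wc_white, if_pos rfl] at hT1
        have hT0 : whiteCountL i us'' = 0 := by omega
        have hTrest : whiteCountL i rest = 0 := by omega
        have hTleg : ∀ j, l ≤ j → legCountL j us'' = 0 := by
          intro j hj; have := hgT.2 j hj
          rw [lc_black, lcl_cons, lc_white] at this; omega
        have hTlegrest : ∀ j, l ≤ j → legCountL j rest = 0 := by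
          intro j hj; have := hgT.2 j hj
          rw [lc_black, lcl_cons] at this; omega
        obtain ⟨cS, hcS, hnS⟩ := wlast hS0 hSleg
        obtain ⟨c1, hc1, hn1⟩ := wlast hT0 hTleg
        have hlent1 : us''.length = k i := (hwflts.1 : IsWF n k (.white i us'')).2.1
        have hlens : us.length = us''.length := by rw [hlen, hlent1]
        rw [← hlens] at hc1 hn1
        have he2 : cS ++ sep l i us.length :: ([] : List ℕ)
            = c1 ++ sep l i us.length :: wordL l rest := by
          have hrw : wordT l (.black (.white i us'' :: rest))
              = wordT l (.white i us'') ++ wordL l rest := rfl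
          rw [hrw, hc1, hcS] at he
          simpa [List.append_assoc] using he
        have hnr : sep l i us.length ∉ wordL l rest := notmem_L _ hTlegrest hTrest
        obtain ⟨-, hnil⟩ := split cS hnS hn1 he2
        cases rest with
        | nil => exact hrest rfl
        | cons t2 r2 =>
            rw [show wordL l (t2 :: r2) = wordT l t2 ++ wordL l r2 from rfl] at hnil
            exact word_ne_nil (hbs t2 (by simp)) l (List.append_eq_nil_iff.mp hnil.symm).1

def INJ (n l : ℕ) (k : ℕ → ℕ) (S : RTree) : Prop :=
  ∀ T, IsWF n k S → IsWF n k T → Good l S → Good l T → wordT l S = wordT l T → S = T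

def INJL (n l : ℕ) (k : ℕ → ℕ) (ts : List RTree) : Prop :=
  (∀ ts' i s, IsWFL n k ts → IsWFL n k ts' → whiteCountL i ts = 0 → whiteCountL i ts' = 0 →
      GoodL l ts → GoodL l ts' → wordI l i s ts = wordI l i s ts' → ts = ts')
  ∧ (∀ ts', (∀ t ∈ ts, t.notBlackOrSpecial) → (∀ t ∈ ts', t.notBlackOrSpecial) →
      IsWFL n k ts → IsWFL n k ts' → GoodL l ts → GoodL l ts' →
      wordL l ts = wordL l ts' → ts = ts')

theorem inj_all (n l : ℕ) (k : ℕ → ℕ) : ∀ S, INJ n l k S := by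
  refine recT (INJ n l k) (INJL n l k) ?_ ?_ ?_ ?_ ?_ ?_
  · -- leg
    intro j T _ hwfT hgS hgT he
    cases T with
    | leg j' => rw [show wordT l (.leg j) = [j] from rfl,
        show wordT l (.leg j') = [j'] from rfl] at he; simp at he; rw [he]
    | special => simp [wordT] at he
    | white i ts =>
        rw [show wordT l (.leg j) = [j] from rfl,
          show wordT l (.white i ts) = sep l i 0 :: wordI l i 1 ts from rfl] at he
        have hj : j = sep l i 0 := (List.cons_eq_cons.mp he).1
        have := hgS.2 j (hj ▸ le_sep l i 0)
        rw [lc_leg, if_pos rfl] at this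
        omega
    | black ts =>
        obtain ⟨hlenT, hbs, -⟩ := hwfT
        cases ts with
        | nil => simp at hlenT
        | cons t1 rest =>
            cases rest with
            | nil => simp at hlenT
            | cons t2 r2 =>
                have hle := congrArg List.length he
                rw [show wordT l (.leg j) = [j] from rfl,
                  show wordT l (.black (t1 :: t2 :: r2))
                    = wordT l t1 ++ (wordT l t2 ++ wordL l r2) from rfl] at hle
                simp only [List.length_append, List.length_singleton] at hle
                have h1 : 0 < (wordT l t1).length :=
                  List.length_pos_iff.mpr (word_ne_nil (hbs t1 (by simp)) l)
                have h2 : 0 < (wordT l t2).length :=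
                  List.length_pos_iff.mpr (word_ne_nil (hbs t2 (by simp)) l)
                omega
  · -- special
    intro T _ hwfT _ _ he
    exact (word_nil hwfT he.symm).symm
  · -- white
    intro i us ihL T hwfS hwfT hgS hgT he
    cases T with
    | leg j =>
        rw [show wordT l (.leg j) = [j] from rfl,
          show wordT l (.white i us) = sep l i 0 :: wordI l i 1 us from rfl] at he
        have hj : j = sep l i 0 := (List.cons_eq_cons.mp he).1.symm
        have := hgT.2 j (hj ▸ le_sep l i 0)
        rw [lc_leg, if_pos rfl] at this
        omega
    | special => simp [wordT] at he
    | white i' us' =>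
        rw [show wordT l (.white i us) = sep l i 0 :: wordI l i 1 us from rfl,
          show wordT l (.white i' us') = sep l i' 0 :: wordI l i' 1 us' from rfl,
          List.cons_eq_cons] at he
        obtain ⟨rfl, -⟩ := sep_inj he.1
        have h1 : us = us' := by
          refine ihL.1 us' i 1 hwfS.2.2 hwfT.2.2 (good_white_self hgS)
            (good_white_self hgT) (good_white hgS) (good_white hgT) he.2
        rw [h1]
    | black ts => exact absurd he (white_ne_black hwfS hwfT hgS hgT)
  · -- black
    intro ts ihL T hwfS hwfT hgS hgT he
    cases T with
    | leg j =>
        obtain ⟨hlenS, hbs, -⟩ := hwfS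
        cases ts with
        | nil => simp at hlenS
        | cons t1 rest =>
            cases rest with
            | nil => simp at hlenS
            | cons t2 r2 =>
                have hle := congrArg List.length he
                rw [show wordT l (.leg j) = [j] from rfl,
                  show wordT l (.black (t1 :: t2 :: r2))
                    = wordT l t1 ++ (wordT l t2 ++ wordL l r2) from rfl] at hle
                simp only [List.length_append, List.length_singleton] at hle
                have h1 : 0 < (wordT l t1).length :=
                  List.length_pos_iff.mpr (word_ne_nil (hbs t1 (by simp)) l)
                have h2 : 0 < (wordT l t2).length :=
                  List.length_pos_iff.mpr (word_ne_nil (hbs t2 (by simp)) l)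
                omega
    | special => exact absurd (word_nil hwfS he) (by simp)
    | white i' us' => exact absurd he.symm (white_ne_black hwfT hwfS hgT hgS)
    | black ts' =>
        have h1 : ts = ts' := by
          refine ihL.2 ts' hwfS.2.1 hwfT.2.1 hwfS.2.2 hwfT.2.2
            (good_black hgS) (good_black hgT) he
        rw [h1]
  · -- nil
    constructor
    · intro ts' i s _ _ _ _ _ _ he
      cases ts' with
      | nil => rfl
      | cons t' tr' =>
          rw [show wordI l i s ([] : List RTree) = [] from rfl,
            show wordI l i s (t' :: tr')
              = wordT l t' ++ sep l i s :: wordI l i (s+1) tr' from rfl] at he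
          exact absurd he.symm (by simp)
    · intro ts' _ hbs' _ _ _ _ he
      cases ts' with
      | nil => rfl
      | cons t' tr' =>
          rw [show wordL l ([] : List RTree) = [] from rfl,
            show wordL l (t' :: tr') = wordT l t' ++ wordL l tr' from rfl] at he
          have := (List.append_eq_nil_iff.mp he.symm).1
          exact absurd this (word_ne_nil (hbs' t' (by simp)) l)
  · -- cons
    intro t ts ihT ihL
    constructor
    · -- INJ I : words with separators
      intro ts' i s hwfl hwfl' hw hw' hg hg' he
      cases ts' with
      | nil =>
          rw [show wordI l i s ([] : List RTree) = [] from rfl,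
            show wordI l i s (t :: ts)
              = wordT l t ++ sep l i s :: wordI l i (s+1) ts from rfl] at he
          exact absurd he (by simp)
      | cons t' tr' =>
          rw [show wordI l i s (t :: ts)
              = wordT l t ++ sep l i s :: wordI l i (s+1) ts from rfl,
            show wordI l i s (t' :: tr')
              = wordT l t' ++ sep l i s :: wordI l i (s+1) tr' from rfl] at he
          rw [wcl_cons] at hw hw'
          have hnt : sep l i s ∉ wordT l t :=
            notmem_T s (fun j hj => ((goodL_cons hg).1).2 j hj) (by omega)
          have hnt' : sep l i s ∉ wordT l t' :=
            notmem_T s (fun j hj => ((goodL_cons hg').1).2 j hj) (by omega)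
          obtain ⟨hc, hb⟩ := split (wordT l t) hnt hnt' he
          have h1 : t = t' := ihT t' hwfl.1 hwfl'.1 (goodL_cons hg).1 (goodL_cons hg').1 hc
          have h2 : ts = tr' := ihL.1 tr' i (s+1) hwfl.2 hwfl'.2 (by omega) (by omega)
            (goodL_cons hg).2 (goodL_cons hg').2 hb
          rw [h1, h2]
    · -- INJ A : concatenated words of atoms
      intro ts' hbs hbs' hwfl hwfl' hg hg' he
      cases ts' with
      | nil =>
          rw [show wordL l (t :: ts) = wordT l t ++ wordL l ts from rfl,
            show wordL l ([] : List RTree) = [] from rfl] at he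
          exact absurd (List.append_eq_nil_iff.mp he).1 (word_ne_nil (hbs t (by simp)) l)
      | cons t' tr' =>
          have hat : t.notBlackOrSpecial := hbs t (by simp)
          have hat' : t'.notBlackOrSpecial := hbs' t' (by simp)
          cases t with
          | special => exact absurd hat (by simp [RTree.notBlackOrSpecial])
          | black _ => exact absurd hat (by simp [RTree.notBlackOrSpecial])
          | leg j =>
              cases t' with
              | special => exact absurd hat' (by simp [RTree.notBlackOrSpecial])
              | black _ => exact absurd hat' (by simp [RTree.notBlackOrSpecial])
              | white i' us' =>
                  rw [show wordL l (.leg j :: ts) = j :: wordL l ts from rfl,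
                    show wordL l (.white i' us' :: tr')
                      = sep l i' 0 :: (wordI l i' 1 us' ++ wordL l tr') from rfl,
                    List.cons_eq_cons] at he
                  have := hg.2 j (he.1 ▸ le_sep l i' 0)
                  rw [lcl_cons, lc_leg, if_pos rfl] at this
                  omega
              | leg j' =>
                  rw [show wordL l (.leg j :: ts) = j :: wordL l ts from rfl,
                    show wordL l (.leg j' :: tr') = j' :: wordL l tr' from rfl,
                    List.cons_eq_cons] at he
                  obtain ⟨rfl, he2⟩ := he
                  have h2 : ts = tr' := ihL.2 tr' (fun u hu => hbs u (by simp [hu]))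
                    (fun u hu => hbs' u (by simp [hu])) hwfl.2 hwfl'.2
                    (goodL_cons hg).2 (goodL_cons hg').2 he2
                  rw [h2]
          | white i us =>
              cases t' with
              | special => exact absurd hat' (by simp [RTree.notBlackOrSpecial])
              | black _ => exact absurd hat' (by simp [RTree.notBlackOrSpecial])
              | leg j' =>
                  rw [show wordL l (.white i us :: ts)
                      = sep l i 0 :: (wordI l i 1 us ++ wordL l ts) from rfl,
                    show wordL l (.leg j' :: tr') = j' :: wordL l tr' from rfl,
                    List.cons_eq_cons] at he
                  have := hg'.2 j' (he.1 ▸ le_sep l i 0)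
                  rw [lcl_cons, lc_leg, if_pos rfl] at this
                  omega
              | white i' us' =>
                  have hhd : sep l i 0 = sep l i' 0 := by
                    rw [show wordL l (.white i us :: ts)
                        = sep l i 0 :: (wordI l i 1 us ++ wordL l ts) from rfl,
                      show wordL l (.white i' us' :: tr')
                        = sep l i' 0 :: (wordI l i' 1 us' ++ wordL l tr') from rfl,
                      List.cons_eq_cons] at he
                    exact he.1
                  obtain ⟨rfl, -⟩ := sep_inj hhd
                  -- counts
                  have hgc := hg.1 i
                  rw [wcl_cons, wc_white, if_pos rfl] at hgc
                  have hgc' := hg'.1 i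
                  rw [wcl_cons, wc_white, if_pos rfl] at hgc'
                  have hus0 : whiteCountL i us = 0 := by omega
                  have hts0 : whiteCountL i ts = 0 := by omega
                  have hus0' : whiteCountL i us' = 0 := by omega
                  have htr0' : whiteCountL i tr' = 0 := by omega
                  have husleg : ∀ j, l ≤ j → legCountL j us = 0 := by
                    intro j hj; have := hg.2 j hj
                    rw [lcl_cons, lc_white] at this; omega
                  have husleg' : ∀ j, l ≤ j → legCountL j us' = 0 := by
                    intro j hj; have := hg'.2 j hj
                    rw [lcl_cons, lc_white] at this; omega
                  have htsleg : ∀ j, l ≤ j → legCountL j ts = 0 := by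
                    intro j hj; have := hg.2 j hj
                    rw [lcl_cons] at this; omega
                  have htrleg : ∀ j, l ≤ j → legCountL j tr' = 0 := by
                    intro j hj; have := hg'.2 j hj
                    rw [lcl_cons] at this; omega
                  obtain ⟨c, hc, hnc⟩ := wlast hus0 husleg
                  obtain ⟨c', hc', hnc'⟩ := wlast hus0' husleg'
                  have hlens : us'.length = us.length := by
                    rw [(hwfl.1 : IsWF n k (.white i us)).2.1,
                      (hwfl'.1 : IsWF n k (.white i us')).2.1]
                  rw [hlens] at hc' hnc'
                  have he2 : c ++ sep l i us.length :: wordL l ts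
                      = c' ++ sep l i us.length :: wordL l tr' := by
                    rw [show wordL l (.white i us :: ts)
                        = wordT l (.white i us) ++ wordL l ts from rfl,
                      show wordL l (.white i us' :: tr')
                        = wordT l (.white i us') ++ wordL l tr' from rfl,
                      hc, hc'] at he
                    simpa using he
                  obtain ⟨hcc, hbb⟩ := split c hnc hnc' he2
                  have hw1 : wordT l (.white i us) = wordT l (.white i us') := by
                    rw [hc, hc', hcc]
                  have h1 : RTree.white i us = RTree.white i us' :=
                    ihT (.white i us') hwfl.1 hwfl'.1 (goodL_cons hg).1 (goodL_cons hg').1 hw1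
                  have h2 : ts = tr' := ihL.2 tr' (fun u hu => hbs u (by simp [hu]))
                    (fun u hu => hbs' u (by simp [hu])) hwfl.2 hwfl'.2
                    (goodL_cons hg).2 (goodL_cons hg').2 hbb
                  rw [h1, h2]

end TreeSep

/-!
STATEMENT 12: Let `U = T(x_1,x_2,…) = FreeAlgebra ℤ ℕ` be the free unital
associative ℤ-algebra on countably many generators.  For each
`(l; k_1,…,k_n)`-tree `T` there exist Hochschild cochains
`f^T_i ∈ C^{k_i}(U;U)` and a monomial `h^T ∈ U` such that for any
`(l; k_1,…,k_n)`-tree `S`, the coefficient of `h^T` in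
`O_S(f^T_1,…,f^T_n)(x_1,…,x_l)` equals `1` if `S = T` and `0` otherwise.
(The coefficient is taken with respect to the monomial basis of `U`, indexed
by `FreeMonoid ℕ`; the inputs `x_1,…,x_l` are the generators `ι 0,…,ι (l-1)`.)
-/
theorem tree_separating_cochains (n l : ℕ) (k : ℕ → ℕ) (T : RTree)
    (hT : IsTree n l k T) :
    ∃ (f : ∀ i : ℕ,
        MultilinearMap ℤ (fun _ : Fin (k i) => FreeAlgebra ℤ ℕ) (FreeAlgebra ℤ ℕ))
      (h : FreeMonoid ℕ),
      ∀ S : RTree, IsTree n l k S →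
        ((S = T →
            (FreeAlgebra.basisFreeMonoid ℤ ℕ).repr
              (evalT k f (fun j => FreeAlgebra.ι ℤ j) S) h = 1)
          ∧ (S ≠ T →
            (FreeAlgebra.basisFreeMonoid ℤ ℕ).repr
              (evalT k f (fun j => FreeAlgebra.ι ℤ j) S) h = 0)) := by
  refine ⟨TreeSep.Ff l k, FreeMonoid.ofList (TreeSep.wordT l T), fun S hS => ⟨?_, ?_⟩⟩
  · intro hST
    subst hST
    rw [TreeSep.eval_eq n l k S hS.1, TreeSep.repr_mono, if_pos rfl]
  · intro hne
    rw [TreeSep.eval_eq n l k S hS.1, TreeSep.repr_mono, if_neg]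
    intro hw
    exact hne (TreeSep.inj_all n l k S T hS.1 hT.1 (TreeSep.good_of_isTree hS)
      (TreeSep.good_of_isTree hT) hw)
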